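/- Let U be a finite type and let f : Finset U → ℝ be a nonnegative submodular set function with f(∅) ≥ 0. Let O ⊆ U be a finite set, let h ≥ 1 with h ≤ |O|, and let T = {i_1, …, i_h} ⊆ O be chosen greedily by residual profit: writing K_ℓ = {i_1, …, i_ℓ} (K_0 = ∅), for each ℓ the element i_ℓ maximizes f(K_{ℓ−1} ∪ {i}) − f(K_{ℓ−1}) over i ∈ O \ K_{ℓ−1}, and T = K_h. Then for every R ⊆ O \ T, f(O \ R) ≥ f(O) − (|R|/h)·f(T). -/
import Mathlib


/-- The set of the first `ℓ` elements of the greedy sequence `a`. -/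
def prefixSet {U : Type*} [DecidableEq U] {h : ℕ} (a : Fin h → U) (ℓ : ℕ) :
    Finset U :=
  (Finset.univ.filter fun j : Fin h => (j : ℕ) < ℓ).image a

section Aux

variable {U : Type*} [DecidableEq U]

lemma prefixSet_mono {h : ℕ} (a : Fin h → U) {ℓ m : ℕ} (hlm : ℓ ≤ m) :
    prefixSet a ℓ ⊆ prefixSet a m := by
  apply Finset.image_subset_image
  intro j hj
  simp only [Finset.mem_filter, Finset.mem_univ, true_and] at hj ⊢
  omega

lemma prefixSet_zero {h : ℕ} (a : Fin h → U) : prefixSet a 0 = ∅ := by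
  simp [prefixSet]

lemma prefixSet_succ {h : ℕ} (a : Fin h → U) (ℓ : Fin h) :
    prefixSet a ((ℓ : ℕ) + 1) = insert (a ℓ) (prefixSet a ℓ) := by
  unfold prefixSet
  ext x
  simp only [Finset.mem_image, Finset.mem_filter, Finset.mem_univ, true_and,
    Finset.mem_insert]
  constructor
  · rintro ⟨j, hj, rfl⟩
    rcases Nat.lt_succ_iff_lt_or_eq.mp hj with h' | h'
    · exact Or.inr ⟨j, h', rfl⟩
    · left; congr 1; exact Fin.ext h'
  · rintro (rfl | ⟨j, hj, rfl⟩)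
    · exact ⟨ℓ, Nat.lt_succ_self _, rfl⟩
    · exact ⟨j, Nat.lt_succ_of_lt hj, rfl⟩

lemma marg (f : Finset U → ℝ)
    (hsub : ∀ S T : Finset U, f (S ∪ T) + f (S ∩ T) ≤ f S + f T)
    {A B : Finset U} (hAB : A ⊆ B) {x : U} (hx : x ∉ B) :
    f (insert x B) - f B ≤ f (insert x A) - f A := by
  have key := hsub (insert x A) B
  have h1 : insert x A ∪ B = insert x B := by
    rw [Finset.insert_union, Finset.union_eq_right.mpr hAB]
  have h2 : insert x A ∩ B = A := by
    ext y
    simp only [Finset.mem_inter, Finset.mem_insert]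
    constructor
    · rintro ⟨rfl | hy, hyB⟩
      · exact absurd hyB hx
      · exact hy
    · intro hy; exact ⟨Or.inr hy, hAB hy⟩
  rw [h1, h2] at key
  linarith

lemma sum_marg (f : Finset U → ℝ)
    (hsub : ∀ S T : Finset U, f (S ∪ T) + f (S ∩ T) ≤ f S + f T)
    (R : Finset U) : ∀ B : Finset U, Disjoint R B →
      f (B ∪ R) ≤ f B + ∑ r ∈ R, (f (insert r B) - f B) := by
  induction R using Finset.induction_on with
  | empty => simp
  | @insert x s hx ih =>
    intro B hdisj
    have hdisj' : Disjoint s B := (Finset.disjoint_insert_left.mp hdisj).2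
    have hxB : x ∉ B := (Finset.disjoint_insert_left.mp hdisj).1
    have hxBs : x ∉ B ∪ s := by
      simp only [Finset.mem_union, not_or]; exact ⟨hxB, hx⟩
    have h1 : f (insert x (B ∪ s)) - f (B ∪ s) ≤ f (insert x B) - f B :=
      marg f hsub Finset.subset_union_left hxBs
    have h2 := ih B hdisj'
    have h3 : B ∪ insert x s = insert x (B ∪ s) := Finset.union_insert x B s
    rw [h3, Finset.sum_insert hx]
    linarith

end Aux

theorem greedy_removal_loss_bound
    {U : Type*} [Fintype U] [DecidableEq U] (f : Finset U → ℝ)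
    (hsub : ∀ S T : Finset U, f (S ∪ T) + f (S ∩ T) ≤ f S + f T)
    (hnonneg : ∀ S : Finset U, 0 ≤ f S)
    (hempty : 0 ≤ f ∅)
    (O : Finset U) (h : ℕ) (hh : 1 ≤ h) (hhO : h ≤ O.card)
    (a : Fin h → U) (ha : Function.Injective a)
    (haO : ∀ ℓ : Fin h, a ℓ ∈ O \ prefixSet a ℓ)
    (hgreedy : ∀ ℓ : Fin h, ∀ i ∈ O \ prefixSet a ℓ,
      f (insert i (prefixSet a ℓ)) - f (prefixSet a ℓ) ≤
        f (insert (a ℓ) (prefixSet a ℓ)) - f (prefixSet a ℓ)) :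
    ∀ R ⊆ O \ prefixSet a h,
      f O - ((R.card : ℝ) / h) * f (prefixSet a h) ≤ f (O \ R) := by
  intro R hR
  have hprefO : ∀ ℓ : ℕ, prefixSet a ℓ ⊆ O := by
    intro ℓ x hx
    simp only [prefixSet, Finset.mem_image, Finset.mem_filter, Finset.mem_univ,
      true_and] at hx
    obtain ⟨j, _, rfl⟩ := hx
    exact (Finset.mem_sdiff.mp (haO j)).1
  set T := prefixSet a h with hT
  set B := O \ R with hB
  have hRO : R ⊆ O := hR.trans (Finset.sdiff_subset)
  have hdisj : Disjoint R B := Finset.sdiff_disjoint.symm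
  have hBR : B ∪ R = O := Finset.sdiff_union_of_subset hRO
  have hh0 : (0:ℝ) < h := by exact_mod_cast hh
  -- key per-element bound
  have hkey : ∀ r ∈ R, f (insert r B) - f B ≤ f T / h := by
    intro r hrR
    have hrB : r ∉ B := fun h' => (Finset.mem_sdiff.mp h').2 hrR
    have hrO : r ∈ O := hRO hrR
    have hrT : r ∉ T := (Finset.mem_sdiff.mp (hR hrR)).2
    have hstep : ∀ ℓ : Fin h,
        f (insert r B) - f B ≤ f (prefixSet a ((ℓ:ℕ)+1)) - f (prefixSet a ℓ) := by
      intro ℓ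
      have hKB : prefixSet a (ℓ:ℕ) ⊆ B := by
        intro x hx
        refine Finset.mem_sdiff.mpr ⟨hprefO _ hx, fun hxR => ?_⟩
        exact (Finset.mem_sdiff.mp (hR hxR)).2 (prefixSet_mono a ℓ.isLt.le hx)
      have h1 := marg f hsub hKB hrB
      have hrmem : r ∈ O \ prefixSet a ℓ :=
        Finset.mem_sdiff.mpr ⟨hrO, fun hc => hrT (prefixSet_mono a ℓ.isLt.le hc)⟩
      have h2 := hgreedy ℓ r hrmem
      rw [prefixSet_succ]
      linarith
    have hsum : (h:ℝ) * (f (insert r B) - f B) ≤ f T - f ∅ := by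
      calc (h:ℝ) * (f (insert r B) - f B)
          = ∑ _ℓ ∈ Finset.range h, (f (insert r B) - f B) := by
            rw [Finset.sum_const, Finset.card_range, nsmul_eq_mul]
        _ ≤ ∑ ℓ ∈ Finset.range h, (f (prefixSet a (ℓ+1)) - f (prefixSet a ℓ)) :=
            Finset.sum_le_sum (fun ℓ hℓ => hstep ⟨ℓ, Finset.mem_range.mp hℓ⟩)
        _ = f (prefixSet a h) - f (prefixSet a 0) :=
            Finset.sum_range_sub (fun ℓ => f (prefixSet a ℓ)) h
        _ = f T - f ∅ := by rw [prefixSet_zero]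
    rw [le_div_iff₀ hh0]
    nlinarith
  have hmain := sum_marg f hsub R B hdisj
  rw [hBR] at hmain
  have hsumle : ∑ r ∈ R, (f (insert r B) - f B) ≤ (R.card : ℝ) * (f T / h) := by
    calc ∑ r ∈ R, (f (insert r B) - f B) ≤ ∑ _r ∈ R, f T / h :=
          Finset.sum_le_sum hkey
      _ = (R.card : ℝ) * (f T / h) := by rw [Finset.sum_const, nsmul_eq_mul]
  have heq : (R.card : ℝ) * (f T / h) = (R.card : ℝ) / h * f T := by ring
  linarith
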